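/- arXiv:0804.3639 — 2 statements merged into one kernel-verified Lean document; each statement's English description precedes it below -/
import Mathlib

section
/- Fix integers d ≥ 1 and n ≥ 1, and let γ_i denote the coefficient of t^i in (1 + t + ⋯ + t^{n−1})^{d+1}, for 0 ≤ i ≤ L where L = (n−1)(d+1). Then the coefficients are positive (γ_i > 0 for 0 ≤ i ≤ L), symmetric (γ_i = γ_{L−i} for 0 ≤ i ≤ L), and strictly unimodal: γ_{i−1} < γ_i for all 1 ≤ i ≤ ⌊L/2⌋ (equivalently, by symmetry, γ_i > γ_{i+1} for ⌈L/2⌉ ≤ i ≤ L−1). -/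
open Polynomial

/-- The polynomial `1 + t + ⋯ + t^{n-1}`. -/
noncomputable def geomPoly (n : ℕ) : Polynomial ℤ :=
  ∑ j ∈ Finset.range n, X ^ j

namespace GP

open Finset

lemma coeff_geom (n i : ℕ) : (geomPoly n).coeff i = if i < n then 1 else 0 := by
  simp [geomPoly, finset_sum_coeff, coeff_X_pow, eq_comm]

lemma natDegree_geom_le (n : ℕ) : (geomPoly n).natDegree ≤ n - 1 := by
  refine natDegree_sum_le_of_forall_le _ _ fun j hj => ?_
  have := Finset.mem_range.mp hj
  simp only [natDegree_X_pow]
  omega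

lemma natDegree_pow_le' (n k : ℕ) : (geomPoly n ^ k).natDegree ≤ (n - 1) * k := by
  calc (geomPoly n ^ k).natDegree ≤ k * (geomPoly n).natDegree := natDegree_pow_le
    _ ≤ k * (n - 1) := Nat.mul_le_mul_left _ (natDegree_geom_le n)
    _ = (n - 1) * k := Nat.mul_comm _ _

lemma rec1 (n k i : ℕ) : (geomPoly n ^ (k + 1)).coeff i =
    ∑ j ∈ range n, if j ≤ i then (geomPoly n ^ k).coeff (i - j) else 0 := by
  rw [pow_succ, geomPoly, Finset.mul_sum, finset_sum_coeff]
  exact Finset.sum_congr rfl fun j _ => coeff_mul_X_pow' _ _ _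

lemma nonneg (n k i : ℕ) : 0 ≤ (geomPoly n ^ k).coeff i := by
  induction k generalizing i with
  | zero => simp [coeff_one]; positivity
  | succ k ih =>
    rw [rec1]
    refine Finset.sum_nonneg fun j _ => ?_
    split
    · exact ih _
    · exact le_refl 0

lemma pos (n k : ℕ) (hn : 1 ≤ n) (hk : 1 ≤ k) :
    ∀ i ≤ (n - 1) * k, 0 < (geomPoly n ^ k).coeff i := by
  induction k with
  | zero => omega
  | succ k ih =>
    intro i hi
    have e1 : (n - 1) * (k + 1) = (n - 1) * k + (n - 1) := by ring
    rcases Nat.eq_zero_or_pos k with rfl | hk'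
    · simpa [coeff_geom] using by rw [if_pos (by omega)]; norm_num
    · rw [rec1]
      refine Finset.sum_pos' (fun j _ => by split <;> [exact nonneg n k _; exact le_refl 0]) ?_
      refine ⟨i - (n - 1) * k, Finset.mem_range.mpr (by omega), ?_⟩
      rw [if_pos (by omega)]
      exact ih hk' _ (by omega)

lemma reflect_geom (n : ℕ) : reflect (n - 1) (geomPoly n) = geomPoly n := by
  rcases Nat.eq_zero_or_pos n with rfl | hn
  · simp [geomPoly]
  ext i
  rw [coeff_reflect]
  rcases le_or_gt i (n - 1) with h | h
  · rw [revAt_le h, coeff_geom, coeff_geom, if_pos (by omega), if_pos (by omega)]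
  · rw [revAt_eq_self_of_lt h]

lemma reflect_pow (n k : ℕ) : reflect ((n - 1) * k) (geomPoly n ^ k) = geomPoly n ^ k := by
  induction k with
  | zero => simp
  | succ k ih =>
    rw [pow_succ, show (n - 1) * (k + 1) = (n - 1) * k + (n - 1) from by ring,
      reflect_mul _ _ (natDegree_pow_le' n k) (natDegree_geom_le n), ih, reflect_geom]

lemma symm_coeff (n k i : ℕ) (hi : i ≤ (n - 1) * k) :
    (geomPoly n ^ k).coeff i = (geomPoly n ^ k).coeff ((n - 1) * k - i) := by
  conv_lhs => rw [← reflect_pow n k]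
  rw [coeff_reflect, revAt_le hi]

lemma diff (n k i : ℕ) (hi : 1 ≤ i) :
    (geomPoly n ^ (k + 1)).coeff i
      + (if n ≤ i then (geomPoly n ^ k).coeff (i - n) else 0)
    = (geomPoly n ^ (k + 1)).coeff (i - 1) + (geomPoly n ^ k).coeff i := by
  have h1 : ∑ j ∈ range (n + 1), (if j ≤ i then (geomPoly n ^ k).coeff (i - j) else 0)
      = (geomPoly n ^ (k + 1)).coeff i
        + (if n ≤ i then (geomPoly n ^ k).coeff (i - n) else 0) := by
    rw [Finset.sum_range_succ, rec1]
  have h2 : ∑ j ∈ range (n + 1), (if j ≤ i then (geomPoly n ^ k).coeff (i - j) else 0)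
      = (geomPoly n ^ k).coeff i + (geomPoly n ^ (k + 1)).coeff (i - 1) := by
    rw [Finset.sum_range_succ']
    simp only [Nat.zero_le, if_true, Nat.sub_zero, add_comm]
    congr 1
    rw [rec1]
    refine Finset.sum_congr rfl fun j _ => ?_
    by_cases hji : j + 1 ≤ i
    · rw [if_pos hji, if_pos (by omega)]
      congr 1
      omega
    · rw [if_neg hji, if_neg (by omega)]
  rw [← h1, h2]; ring

lemma uni (n : ℕ) : ∀ k, 2 ≤ k → ∀ i, 1 ≤ i → i ≤ (n - 1) * k / 2 →
    (geomPoly n ^ k).coeff (i - 1) < (geomPoly n ^ k).coeff i := by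
  rcases Nat.eq_zero_or_pos n with rfl | hn
  · intro k hk i h1 h2
    simp only [Nat.zero_sub, Nat.zero_mul] at h2
    omega
  intro k hk
  induction k, hk using Nat.le_induction with
  | base =>
    intro i h1 h2
    have hi : i ≤ n - 1 := by
      have := (Nat.le_div_iff_mul_le (by norm_num)).mp h2
      omega
    have hdd := diff n 1 i h1
    rw [show (1 : ℕ) + 1 = 2 from rfl, if_neg (by omega), pow_one, coeff_geom,
      if_pos (by omega)] at hdd
    omega
  | succ k hk ih =>
    intro i h1 h2
    have h2' : 2 * i ≤ (n - 1) * k + (n - 1) := by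
      have e1 : (n - 1) * (k + 1) = (n - 1) * k + (n - 1) := by ring
      have := (Nat.le_div_iff_mul_le (by norm_num)).mp h2
      omega
    set L := (n - 1) * k with hL
    have hmono : ∀ a b, a < b → b ≤ L / 2 →
        (geomPoly n ^ k).coeff a < (geomPoly n ^ k).coeff b := by
      intro a b hab hb
      have main : ∀ b, a + 1 ≤ b → b ≤ L / 2 →
          (geomPoly n ^ k).coeff a < (geomPoly n ^ k).coeff b := by
        intro b hb1
        induction b, hb1 using Nat.le_induction with
        | base =>
          intro hle
          have := ih (a + 1) (by omega) hle
          simpa using this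
        | succ b hb2 ih2 =>
          intro hle
          have hb' : b ≤ L / 2 := by omega
          refine (ih2 hb').trans ?_
          have := ih (b + 1) (by omega) hle
          simpa using this
      exact main b hab hb
    have hred : ∀ x ≤ L, (geomPoly n ^ k).coeff x
        = (geomPoly n ^ k).coeff (min x (L - x)) := by
      intro x hx
      rcases le_or_gt x (L - x) with h | h
      · rw [min_eq_left h]
      · rw [min_eq_right h.le, symm_coeff n k x hx]
    have hdiff := diff n k i h1
    by_cases hni : n ≤ i
    · rw [if_pos hni] at hdiff
      have hiL : i ≤ L := by omega
      have haL : i - n ≤ L := by omega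
      have key : (geomPoly n ^ k).coeff (i - n) < (geomPoly n ^ k).coeff i := by
        rw [hred _ haL, hred _ hiL]
        refine hmono _ _ ?_ ?_
        · omega
        · rw [Nat.le_div_iff_mul_le (by norm_num)]
          omega
      omega
    · rw [if_neg hni] at hdiff
      have hle : (n - 1) * 1 ≤ (n - 1) * k := Nat.mul_le_mul_left _ (by omega)
      have hle' : n - 1 ≤ (n - 1) * k := by omega
      have hik : i ≤ (n - 1) * k := by omega
      have hpos : 0 < (geomPoly n ^ k).coeff i := pos n k hn (by omega) i hik
      omega

end GP

theorem stmt17 (d n : ℕ) (hd : 1 ≤ d) (hn : 1 ≤ n) :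
    -- the coefficients γ_i of (1 + t + ⋯ + t^{n-1})^{d+1}, 0 ≤ i ≤ L = (n-1)(d+1), are
    -- positive:
    (∀ i ≤ (n - 1) * (d + 1), 0 < (geomPoly n ^ (d + 1)).coeff i) ∧
    -- symmetric:
    (∀ i ≤ (n - 1) * (d + 1),
      (geomPoly n ^ (d + 1)).coeff i =
        (geomPoly n ^ (d + 1)).coeff ((n - 1) * (d + 1) - i)) ∧
    -- strictly unimodal:
    (∀ i : ℕ, 1 ≤ i → i ≤ (n - 1) * (d + 1) / 2 →
      (geomPoly n ^ (d + 1)).coeff (i - 1) < (geomPoly n ^ (d + 1)).coeff i) := by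
  exact ⟨GP.pos n (d + 1) hn (by omega),
    fun i hi => GP.symm_coeff n (d + 1) i hi,
    GP.uni n (d + 1) (by omega)⟩
end

section
/- With the notation of the context, suppose that a(t) has degree d and all of its coefficients a_0, …, a_d are positive integers, and fix 1 ≤ k ≤ ⌊d/2⌋. If either (n and d are both even and n ≥ d/(d+1−2k)) or n ≥ (d+1)/(d+1−2k), then a'_k > a'_{k−1}. -/
open Polynomial

/-- `ehrG d p m = ∑_{i=0}^{d} p_i * C(m+d-i, d)`, the value at `m` of the polynomial `g`
associated to `p` by `p(t)/(1-t)^(d+1) = ∑_{m ≥ 0} g(m) tᵐ`. -/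
def ehrG (d : ℕ) (p : Polynomial ℤ) (m : ℕ) : ℤ :=
  ∑ i ∈ Finset.range (d + 1), p.coeff i * ((m + d - i).choose d : ℤ)


/-- geometric polynomial 1 + X + ... + X^(n-1) over ℤ -/
noncomputable def geomP (n : ℕ) : Polynomial ℤ := ∑ e ∈ Finset.range n, X ^ e

lemma coeff_geomP (n r : ℕ) : (geomP n).coeff r = if r < n then 1 else 0 := by
  simp only [geomP, Polynomial.finset_sum_coeff, Polynomial.coeff_X_pow]
  simp only [show ∀ e, (if r = e then (1:ℤ) else 0) = (if e = r then (1:ℤ) else 0) from fun e => by simp [eq_comm]]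
  rw [Finset.sum_ite_eq' (Finset.range n) r (fun _ => (1:ℤ))]
  simp

lemma natDegree_geomP_le (n : ℕ) : (geomP n).natDegree ≤ n - 1 := by
  rw [Polynomial.natDegree_le_iff_coeff_eq_zero]
  intro N hN
  rw [coeff_geomP]
  have : ¬ N < n := by omega
  simp [this]

lemma natDegree_geomP_pow_le (n m : ℕ) : (geomP n ^ m).natDegree ≤ (n-1) * m := by
  calc (geomP n ^ m).natDegree ≤ m * (geomP n).natDegree := Polynomial.natDegree_pow_le
    _ ≤ m * (n-1) := Nat.mul_le_mul_left m (natDegree_geomP_le n)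
    _ = (n-1) * m := Nat.mul_comm _ _

lemma coeff_geomP_pow_eq_zero {n m r : ℕ} (hr : (n-1) * m < r) : (geomP n ^ m).coeff r = 0 :=
  Polynomial.coeff_eq_zero_of_natDegree_lt (lt_of_le_of_lt (natDegree_geomP_pow_le n m) hr)

lemma coeff_geomP_pow_nonneg (n m r : ℕ) : 0 ≤ (geomP n ^ m).coeff r := by
  induction m generalizing r with
  | zero => simp [Polynomial.coeff_one]; positivity
  | succ m ih =>
    rw [pow_succ, Polynomial.coeff_mul]
    apply Finset.sum_nonneg
    rintro ⟨x, y⟩ _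
    have h1 := ih x
    have h2 : (0:ℤ) ≤ (geomP n).coeff y := by rw [coeff_geomP]; positivity
    positivity

lemma coeff_geomP_pow_pos {n m r : ℕ} (hn : 1 ≤ n) (hr : r ≤ (n-1) * m) :
    0 < (geomP n ^ m).coeff r := by
  induction m generalizing r with
  | zero => simp at hr; simp [hr]
  | succ m ih =>
    have hsplit : ∃ e s, e < n ∧ s ≤ (n-1)*m ∧ e + s = r := by
      rcases le_or_gt r (n-1) with hc | hc
      · exact ⟨r, 0, by omega, by omega, by omega⟩
      · refine ⟨n-1, r - (n-1), by omega, ?_, by omega⟩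
        have : (n-1) * (m+1) = (n-1)*m + (n-1) := by ring
        omega
    obtain ⟨e, s, he, hs, hes⟩ := hsplit
    rw [pow_succ, Polynomial.coeff_mul]
    have hmem : (s, e) ∈ Finset.HasAntidiagonal.antidiagonal r := by
      simp [Finset.HasAntidiagonal.mem_antidiagonal]; omega
    have hterm : 0 < (geomP n ^ m).coeff s * (geomP n).coeff e := by
      rw [coeff_geomP, if_pos he, mul_one]; exact ih hs
    refine lt_of_lt_of_le hterm ?_
    apply Finset.single_le_sum (f := fun p => (geomP n ^ m).coeff p.1 * (geomP n).coeff p.2) ?_ hmem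
    rintro ⟨x, y⟩ _
    have h1 := coeff_geomP_pow_nonneg n m x
    have h2 : (0:ℤ) ≤ (geomP n).coeff y := by rw [coeff_geomP]; positivity
    positivity

/-- expansion of a polynomial as a sum of monomials over an explicit range -/
lemma poly_as_sum {p : Polynomial ℤ} {D : ℕ} (hp : p.natDegree ≤ D) :
    p = ∑ x ∈ Finset.range (D+1), Polynomial.C (p.coeff x) * X ^ x := by
  exact (Polynomial.as_sum_range' p (D+1) (Nat.lt_succ_of_le hp)).trans
    (Finset.sum_congr rfl fun x _ => (Polynomial.C_mul_X_pow_eq_monomial).symm)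

lemma coeff_mul_range {p q : Polynomial ℤ} {D E : ℕ}
    (hp : p.natDegree ≤ D) (hq : q.natDegree ≤ E) (r : ℕ) :
    (p * q).coeff r =
      ∑ x ∈ Finset.range (D+1), ∑ y ∈ Finset.range (E+1),
        if x + y = r then p.coeff x * q.coeff y else 0 := by
  conv_lhs => rw [poly_as_sum hp, poly_as_sum hq]
  rw [Finset.sum_mul_sum]
  rw [Polynomial.finset_sum_coeff]
  refine Finset.sum_congr rfl fun x _ => ?_
  rw [Polynomial.finset_sum_coeff]
  refine Finset.sum_congr rfl fun y _ => ?_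
  rw [mul_mul_mul_comm, ← Polynomial.C_mul, ← pow_add,
    Polynomial.coeff_C_mul, Polynomial.coeff_X_pow]
  by_cases hxy : x + y = r
  · simp [hxy]
  · simp [hxy, Ne.symm hxy, show ¬ r = x + y from fun h => hxy h.symm]

/-- product of symmetric polynomials is symmetric -/
lemma mul_symm {p q : Polynomial ℤ} {D E : ℕ}
    (hp : p.natDegree ≤ D) (hq : q.natDegree ≤ E)
    (sp : ∀ i ≤ D, p.coeff i = p.coeff (D - i))
    (sq : ∀ i ≤ E, q.coeff i = q.coeff (E - i))
    {r : ℕ} (hr : r ≤ D + E) :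
    (p * q).coeff r = (p * q).coeff (D + E - r) := by
  rw [coeff_mul_range hp hq r, coeff_mul_range hp hq (D+E-r)]
  conv_rhs => rw [← Finset.sum_range_reflect]
  refine Finset.sum_congr rfl fun x hx => ?_
  conv_rhs => rw [← Finset.sum_range_reflect]
  refine Finset.sum_congr rfl fun y hy => ?_
  simp only [Finset.mem_range] at hx hy
  have hx' : x ≤ D := by omega
  have hy' : y ≤ E := by omega
  have h1 : D + 1 - 1 - x = D - x := by omega
  have h2 : E + 1 - 1 - y = E - y := by omega
  rw [h1, h2]
  have hcond : (D - x + (E - y) = D + E - r) ↔ (x + y = r) := by omega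
  by_cases hxy : x + y = r
  · rw [if_pos hxy, if_pos (hcond.mpr hxy), ← sp x hx', ← sq y hy']
  · rw [if_neg hxy, if_neg (fun hc => hxy (hcond.mp hc))]

lemma geomP_symm (n : ℕ) : ∀ i ≤ n - 1, (geomP n).coeff i = (geomP n).coeff (n - 1 - i) := by
  intro i hi
  rcases Nat.eq_zero_or_pos n with h0 | h0
  · subst h0; simp [coeff_geomP]
  · have h1 : i < n := by omega
    have h2 : n - 1 - i < n := by omega
    rw [coeff_geomP, coeff_geomP, if_pos h1, if_pos h2]

lemma geomP_pow_symm (n m : ℕ) :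
    ∀ r ≤ (n-1) * m, (geomP n ^ m).coeff r = (geomP n ^ m).coeff ((n-1) * m - r) := by
  induction m with
  | zero => intro r hr; simp at hr; simp [hr]
  | succ m ih =>
    intro r hr
    have hmul : (n-1) * (m+1) = (n-1) * m + (n-1) := by ring
    rw [pow_succ]
    have := mul_symm (natDegree_geomP_pow_le n m) (natDegree_geomP_le n) ih (geomP_symm n)
      (r := r) (by omega)
    rw [this, hmul]
/-- the step recurrence for coefficients of geomP^m -/
lemma geomP_pow_step (n m r : ℕ) :
    (geomP n ^ (m+1)).coeff (r+1) - (geomP n ^ (m+1)).coeff r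
      = (geomP n ^ m).coeff (r+1) - (if n ≤ r+1 then (geomP n ^ m).coeff (r+1-n) else 0) := by
  have key : geomP n ^ (m+1) * (X - 1) = (X ^ n - 1) * geomP n ^ m := by
    have h1 : geomP n * (X - 1) = X ^ n - 1 := geom_sum_mul X n
    calc geomP n ^ (m+1) * (X - 1) = (geomP n * (X-1)) * geomP n ^ m := by ring
      _ = (X ^ n - 1) * geomP n ^ m := by rw [h1]
  have := congrArg (fun p => Polynomial.coeff p (r+1)) key
  simp only [Polynomial.coeff_sub, mul_sub, sub_mul, one_mul, mul_one] at this
  rw [Polynomial.coeff_mul_X, mul_comm (X^n) (geomP n ^ m), Polynomial.coeff_mul_X_pow'] at this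
  -- this : coeff (m+1) r - coeff (m+1) (r+1) = (if n ≤ r+1 then coeff m (r+1-n) else 0) - coeff m (r+1)
  linarith [this]

/-- strict increase below the center (M2) -/
lemma geomP_pow_strict {n : ℕ} (hn : 2 ≤ n) :
    ∀ m, 2 ≤ m → ∀ r, 2 * (r+1) ≤ (n-1) * m →
      (geomP n ^ m).coeff r < (geomP n ^ m).coeff (r+1) := by
  have hstep : ∀ m r, (geomP n ^ m).coeff (r+1) - (if n ≤ r+1 then (geomP n ^ m).coeff (r+1-n) else 0) > 0
      → (geomP n ^ (m+1)).coeff r < (geomP n ^ (m+1)).coeff (r+1) := by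
    intro m r h
    have := geomP_pow_step n m r
    linarith
  intro m
  induction m with
  | zero => omega
  | succ m ih =>
    intro hm2 r hr
    rcases Nat.lt_or_ge m 2 with hm | hm
    · -- m + 1 = 2, i.e. m = 1
      have hm1 : m = 1 := by omega
      subst hm1
      apply hstep
      have hr' : r + 1 ≤ n - 1 := by omega
      have h1 : (geomP n ^ 1).coeff (r+1) = 1 := by
        rw [pow_one, coeff_geomP, if_pos (by omega)]
      have h2 : ¬ n ≤ r + 1 := by omega
      rw [h1, if_neg h2]; norm_num
    · -- inductive step, m ≥ 2
      have chain : ∀ s t, s < t → 2 * t ≤ (n-1) * m → (geomP n ^ m).coeff s < (geomP n ^ m).coeff t := by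
        intro s t hst h2t
        induction t with
        | zero => omega
        | succ t iht =>
          rcases Nat.lt_or_ge s t with hst' | hst'
          · exact lt_trans (iht hst' (by omega)) (ih hm t (by omega))
          · have : s = t := by omega
            subst this
            exact ih hm s h2t
      apply hstep
      by_cases hcase : n ≤ r + 1
      · rw [if_pos hcase]
        set s := r + 1 - n with hs
        have hsub : s < r + 1 := by omega
        rcases le_or_gt (2 * (r+1)) ((n-1)*m) with hlo | hhi
        · have := chain s (r+1) hsub hlo
          linarith
        · -- reflect: coeff (r+1) = coeff ((n-1)*m - (r+1))
          have hNm : (n-1)*(m+1) = (n-1)*m + (n-1) := by ring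
          have hr1le : r + 1 ≤ (n-1)*m := by omega
          have hsym := geomP_pow_symm n m (r+1) hr1le
          set t' := (n-1)*m - (r+1) with ht'
          have hst' : s < t' := by omega
          have h2t' : 2 * t' ≤ (n-1)*m := by omega
          have := chain s t' hst' h2t'
          rw [hsym]
          linarith
      · rw [if_neg hcase]
        have hpos : 0 < (geomP n ^ m).coeff (r+1) := by
          apply coeff_geomP_pow_pos (by omega)
          have : (n-1)*(m+1) ≤ 2 * ((n-1) * m) := by
            have : m + 1 ≤ 2 * m := by omega
            calc (n-1)*(m+1) ≤ (n-1) * (2*m) := Nat.mul_le_mul_left _ this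
              _ = 2*((n-1)*m) := by ring
          omega
        linarith

/-- weak increase up to one past the center (M1) -/
lemma geomP_pow_mono {n m : ℕ} (hn : 2 ≤ n) (hm : 2 ≤ m) {r : ℕ}
    (hr : 2 * (r+1) ≤ (n-1) * m + 1) :
    (geomP n ^ m).coeff r ≤ (geomP n ^ m).coeff (r+1) := by
  rcases le_or_gt (2*(r+1)) ((n-1)*m) with hlo | hhi
  · exact le_of_lt (geomP_pow_strict hn m hm r hlo)
  · -- 2(r+1) = (n-1)m + 1, plateau
    have heq : 2 * r + 1 = (n-1) * m := by omega
    have hsym := geomP_pow_symm n m r (by omega)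
    have : (n-1)*m - r = r + 1 := by omega
    rw [hsym, this]
noncomputable def Tpoly (e M : ℕ) : Polynomial ℤ :=
  ∑ q ∈ Finset.range (M+1), Polynomial.C (((q+e).choose e : ℕ) : ℤ) * X ^ q

lemma coeff_Tpoly (e M s : ℕ) :
    (Tpoly e M).coeff s = if s ≤ M then (((s+e).choose e : ℕ) : ℤ) else 0 := by
  rw [Tpoly, Polynomial.finset_sum_coeff]
  simp only [Polynomial.coeff_C_mul, Polynomial.coeff_X_pow, mul_ite, mul_one, mul_zero]
  rw [Finset.sum_ite_eq (Finset.range (M+1)) s (fun q => (((q+e).choose e : ℕ) : ℤ))]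
  simp [Nat.lt_succ_iff]

lemma natDegree_Tpoly_le (e M : ℕ) : (Tpoly e M).natDegree ≤ M := by
  rw [Polynomial.natDegree_le_iff_coeff_eq_zero]
  intro N hN
  rw [coeff_Tpoly, if_neg (by omega)]

lemma coeff_one_sub_X_mul (p : Polynomial ℤ) (s : ℕ) :
    ((1 - X) * p).coeff s = p.coeff s - (if 1 ≤ s then p.coeff (s-1) else 0) := by
  rw [sub_mul, one_mul, Polynomial.coeff_sub]
  cases s with
  | zero =>
    simp [Polynomial.mul_coeff_zero]
  | succ s =>
    rw [Polynomial.coeff_X_mul]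
    simp

lemma mul_coeff_congr {p q : Polynomial ℤ} {M : ℕ} (h : ∀ y ≤ M, p.coeff y = q.coeff y)
    (u : Polynomial ℤ) : ∀ s ≤ M, (u*p).coeff s = (u*q).coeff s := by
  intro s hs
  rw [Polynomial.coeff_mul, Polynomial.coeff_mul]
  refine Finset.sum_congr rfl fun xy hxy => ?_
  have hsum : xy.1 + xy.2 = s := Finset.HasAntidiagonal.mem_antidiagonal.mp hxy
  rw [h xy.2 (by omega)]

lemma KLb (e M : ℕ) : ∀ s ≤ M, ((1 - X) * Tpoly (e+1) M).coeff s = (Tpoly e M).coeff s := by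
  intro s hs
  simp only [coeff_one_sub_X_mul, coeff_Tpoly, if_pos hs]
  cases s with
  | zero => simp
  | succ s =>
    rw [if_pos (by omega : 1 ≤ s+1), if_pos (by omega : s+1-1 ≤ M)]
    have h1 : s + 1 + (e + 1) = (s + 1 + e) + 1 := by omega
    have h2 : s + 1 - 1 + (e+1) = s + 1 + e := by omega
    rw [h1, h2, Nat.choose_succ_succ' (s+1+e) e]
    push_cast
    ring

lemma KL (e M : ℕ) : ∀ s ≤ M, ((1 - X)^(e+1) * Tpoly e M).coeff s = if s = 0 then 1 else 0 := by
  induction e with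
  | zero =>
    intro s hs
    rw [pow_one, coeff_one_sub_X_mul, coeff_Tpoly, if_pos hs]
    cases s with
    | zero => simp
    | succ s =>
      rw [if_pos (by omega), coeff_Tpoly, if_pos (by omega)]
      simp
  | succ e ih =>
    intro s hs
    have : (1 - X : Polynomial ℤ)^(e+1+1) * Tpoly (e+1) M
        = (1-X)^(e+1) * ((1 - X) * Tpoly (e+1) M) := by ring
    rw [this, mul_coeff_congr (KLb e M) ((1-X)^(e+1)) s hs]
    exact ih s hs

lemma cancel_low {u p q : Polynomial ℤ} (hu : u.coeff 0 = 1) {M : ℕ}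
    (h : ∀ s ≤ M, (u*p).coeff s = (u*q).coeff s) : ∀ s ≤ M, p.coeff s = q.coeff s := by
  intro s
  induction s using Nat.strong_induction_on with
  | _ s ih =>
    intro hs
    have hm := h s hs
    rw [Polynomial.coeff_mul, Polynomial.coeff_mul] at hm
    have hsplit : ∀ (v : Polynomial ℤ),
        ∑ xy ∈ Finset.HasAntidiagonal.antidiagonal s, u.coeff xy.1 * v.coeff xy.2
        = v.coeff s + ∑ xy ∈ (Finset.HasAntidiagonal.antidiagonal s).erase (0, s),
            u.coeff xy.1 * v.coeff xy.2 := by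
      intro v
      rw [← Finset.add_sum_erase _ _ (by simp : ((0:ℕ),s) ∈ Finset.HasAntidiagonal.antidiagonal s)]
      simp [hu]
    rw [hsplit, hsplit] at hm
    have hcongr : ∀ xy ∈ (Finset.HasAntidiagonal.antidiagonal s).erase (0,s),
        u.coeff xy.1 * p.coeff xy.2 = u.coeff xy.1 * q.coeff xy.2 := by
      rintro ⟨x,y⟩ hxy
      have h1 : x + y = s := Finset.HasAntidiagonal.mem_antidiagonal.mp (Finset.mem_of_mem_erase hxy)
      have h2 : (x,y) ≠ ((0:ℕ),s) := Finset.ne_of_mem_erase hxy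
      have hy : y < s := by
        rcases Nat.eq_zero_or_pos x with hx0 | hx0
        · exfalso; apply h2; subst hx0; simp at h1 ⊢; omega
        · omega
      rw [ih y hy (by omega)]
    rw [Finset.sum_congr rfl hcongr] at hm
    linarith
lemma one_sub_X_mul_geomP (n : ℕ) : (1 - X : Polynomial ℤ) * geomP n = 1 - X^n := by
  have h := geom_sum_mul (X : Polynomial ℤ) n
  rw [geomP]
  linear_combination (-1 : Polynomial ℤ) * h

lemma key_pow (n e : ℕ) :
    (1 - X : Polynomial ℤ)^e * geomP n ^ e = (1 - (X:Polynomial ℤ)^n)^e := by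
  rw [← mul_pow, one_sub_X_mul_geomP]

lemma KLn {n : ℕ} (hn : 0 < n) (d m : ℕ) :
    ∀ s ≤ n*m + (n-1),
      ((1 - X)^(d+1) * (geomP n ^ (d+1) * Polynomial.expand ℤ n (Tpoly d m))).coeff s
        = if s = 0 then 1 else 0 := by
  intro s hs
  have h1 : (1 - X:Polynomial ℤ)^(d+1) * (geomP n ^ (d+1) * Polynomial.expand ℤ n (Tpoly d m))
      = Polynomial.expand ℤ n ((1 - X)^(d+1) * Tpoly d m) := by
    rw [map_mul, map_pow, map_sub, map_one, Polynomial.expand_X, ← mul_assoc, key_pow]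
  rw [h1, Polynomial.coeff_expand hn]
  by_cases hdvd : n ∣ s
  · rw [if_pos hdvd]
    obtain ⟨c, rfl⟩ := hdvd
    rw [Nat.mul_div_cancel_left c hn]
    have hcm : c ≤ m := by
      by_contra hc
      have h1 : n * (m+1) ≤ n * c := Nat.mul_le_mul_left n (by omega)
      have h2 : n * (m+1) = n*m + n := by ring
      omega
    rw [KL d m c hcm]
    by_cases h0 : c = 0
    · rw [if_pos h0, if_pos (by rw [h0, Nat.mul_zero])]
    · rw [if_neg h0, if_neg (fun hc => h0 (by
        rcases Nat.mul_eq_zero.mp hc with h | h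
        · omega
        · exact h))]
  · rw [if_neg hdvd, if_neg (by rintro rfl; exact hdvd ⟨0, by omega⟩)]

lemma coeff_onesub_zero (e : ℕ) : ((1 - X : Polynomial ℤ)^e).coeff 0 = 1 := by
  rw [Polynomial.coeff_zero_eq_eval_zero]
  simp

lemma natDegree_hP_le {n d : ℕ} (hn : 0 < n) {h : Polynomial ℤ} (hdeg : h.natDegree ≤ d) :
    (h * geomP n ^ (d+1)).natDegree ≤ n * (d+1) - 1 := by
  refine le_trans (Polynomial.natDegree_mul_le) ?_
  have h2 := natDegree_geomP_pow_le n (d+1)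
  obtain ⟨n', rfl⟩ : ∃ n', n = n'+1 := ⟨n-1, by omega⟩
  have h3 : (n'+1-1) * (d+1) = n' * (d+1) := by simp
  have h4 : d + n' * (d+1) + 1 = (n'+1) * (d+1) := by ring
  omega

/-- the key identity: coefficients of h·P at multiples of n produce the function m ↦ g(nm) -/
lemma key_coeff {d n : ℕ} (hd : 0 < d) (hn : 0 < n) {h : Polynomial ℤ}
    (hdeg : h.natDegree ≤ d) (m : ℕ) :
    ∑ j ∈ Finset.range (d+1),
        (h * geomP n ^ (d+1)).coeff (n*j) * (((m + d - j).choose d : ℕ) : ℤ)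
      = ehrG d h (n*m) := by
  set P := geomP n ^ (d+1) with hP
  set Q := h * P with hQ
  -- step 1: agreement of the two "series" up to degree n*m
  have hagree : ∀ s ≤ n*m,
      (P * Polynomial.expand ℤ n (Tpoly d m)).coeff s = (Tpoly d (n*m)).coeff s := by
    apply cancel_low (u := (1 - X)^(d+1)) (coeff_onesub_zero (d+1))
    intro s hs
    rw [KLn hn d m s (by omega), KL d (n*m) s hs]
  have hcoeff : (h * (P * Polynomial.expand ℤ n (Tpoly d m))).coeff (n*m)
      = (h * Tpoly d (n*m)).coeff (n*m) := mul_coeff_congr hagree h (n*m) le_rfl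
  -- step 2: expand the left side
  have hexpand : Polynomial.expand ℤ n (Tpoly d m)
      = ∑ q ∈ Finset.range (m+1), Polynomial.C (((q+d).choose d : ℕ) : ℤ) * X ^ (n*q) := by
    rw [Tpoly, map_sum]
    refine Finset.sum_congr rfl fun q _ => ?_
    rw [map_mul, Polynomial.expand_C, map_pow, Polynomial.expand_X, ← pow_mul]
  have hL : (h * (P * Polynomial.expand ℤ n (Tpoly d m))).coeff (n*m)
      = ∑ q ∈ Finset.range (m+1), (((q+d).choose d : ℕ) : ℤ) * Q.coeff (n*(m-q)) := by
    rw [← mul_assoc, ← hQ, hexpand, Finset.mul_sum, Polynomial.finset_sum_coeff]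
    refine Finset.sum_congr rfl fun q hq => ?_
    have hq' : q ≤ m := by simpa [Nat.lt_succ_iff] using hq
    rw [show Q * (Polynomial.C (((q+d).choose d : ℕ) : ℤ) * X ^ (n*q))
        = Polynomial.C (((q+d).choose d : ℕ) : ℤ) * (Q * X ^ (n*q)) from by ring]
    rw [Polynomial.coeff_C_mul, Polynomial.coeff_mul_X_pow',
      if_pos (Nat.mul_le_mul_left n hq'), ← Nat.mul_sub]
  -- reflect the sum
  have hrefl : ∑ q ∈ Finset.range (m+1), (((q+d).choose d : ℕ) : ℤ) * Q.coeff (n*(m-q))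
      = ∑ j ∈ Finset.range (m+1), Q.coeff (n*j) * (((m + d - j).choose d : ℕ) : ℤ) := by
    rw [← Finset.sum_range_reflect]
    refine Finset.sum_congr rfl fun j hj => ?_
    have hj' : j ≤ m := by simpa [Nat.lt_succ_iff] using hj
    have e1 : m + 1 - 1 - j = m - j := by omega
    have e2 : m - (m - j) = j := by omega
    have e3 : m - j + d = m + d - j := by omega
    rw [e1, e2, e3, mul_comm]
  -- adjust the range from m+1 to d+1
  have hadj : ∑ j ∈ Finset.range (m+1), Q.coeff (n*j) * (((m + d - j).choose d : ℕ) : ℤ)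
      = ∑ j ∈ Finset.range (d+1), Q.coeff (n*j) * (((m + d - j).choose d : ℕ) : ℤ) := by
    have hQz : ∀ j, d < j → Q.coeff (n*j) = 0 := by
      intro j hj
      apply Polynomial.coeff_eq_zero_of_natDegree_lt
      have h1 : Q.natDegree ≤ n*(d+1) - 1 := hQ ▸ natDegree_hP_le hn hdeg
      have h2 : n * (d+1) ≤ n * j := Nat.mul_le_mul_left n (by omega)
      have h3 : 0 < n * (d+1) := by positivity
      omega
    have hcz : ∀ j, m < j → (((m + d - j).choose d : ℕ) : ℤ) = 0 := by
      intro j hj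
      rw [Nat.choose_eq_zero_of_lt (by omega)]
      simp
    rw [Finset.sum_subset (Finset.range_subset_range.mpr (by omega : m+1 ≤ m+d+1)),
      Finset.sum_subset (Finset.range_subset_range.mpr (by omega : d+1 ≤ m+d+1))]
    · intro j hj hj'
      simp only [Finset.mem_range, Nat.lt_succ_iff] at hj hj'
      rw [hQz j (by omega), zero_mul]
    · intro j hj hj'
      simp only [Finset.mem_range, Nat.lt_succ_iff] at hj hj'
      rw [hcz j (by omega), mul_zero]
  -- step 3: expand the right side
  have hR : (h * Tpoly d (n*m)).coeff (n*m)
      = ∑ q ∈ Finset.range (n*m+1), (((q+d).choose d : ℕ) : ℤ) * h.coeff (n*m-q) := by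
    rw [Tpoly, Finset.mul_sum, Polynomial.finset_sum_coeff]
    refine Finset.sum_congr rfl fun q hq => ?_
    have hq' : q ≤ n*m := by simpa [Nat.lt_succ_iff] using hq
    rw [show h * (Polynomial.C (((q+d).choose d : ℕ) : ℤ) * X ^ q)
        = Polynomial.C (((q+d).choose d : ℕ) : ℤ) * (h * X ^ q) from by ring]
    rw [Polynomial.coeff_C_mul, Polynomial.coeff_mul_X_pow', if_pos hq']
  have hrefl' : ∑ q ∈ Finset.range (n*m+1), (((q+d).choose d : ℕ) : ℤ) * h.coeff (n*m-q)
      = ∑ i ∈ Finset.range (n*m+1), h.coeff i * (((n*m + d - i).choose d : ℕ) : ℤ) := by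
    rw [← Finset.sum_range_reflect]
    refine Finset.sum_congr rfl fun i hi => ?_
    have hi' : i ≤ n*m := by simpa [Nat.lt_succ_iff] using hi
    have e1 : n*m + 1 - 1 - i = n*m - i := by omega
    have e2 : n*m - (n*m - i) = i := by omega
    have e3 : n*m - i + d = n*m + d - i := by omega
    rw [e1, e2, e3, mul_comm]
  have hadj' : ∑ i ∈ Finset.range (n*m+1), h.coeff i * (((n*m + d - i).choose d : ℕ) : ℤ)
      = ehrG d h (n*m) := by
    rw [ehrG]
    have hhz : ∀ i, d < i → h.coeff i = 0 := fun i hi =>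
      Polynomial.coeff_eq_zero_of_natDegree_lt (by omega)
    have hcz : ∀ i, n*m < i → (((n*m + d - i).choose d : ℕ) : ℤ) = 0 := by
      intro i hi
      rw [Nat.choose_eq_zero_of_lt (by omega)]
      simp
    rw [Finset.sum_subset (Finset.range_subset_range.mpr (by omega : n*m+1 ≤ n*m+d+1)),
      Finset.sum_subset (Finset.range_subset_range.mpr (by omega : d+1 ≤ n*m+d+1))]
    · intro i hi hi'
      simp only [Finset.mem_range, Nat.lt_succ_iff] at hi hi'
      rw [hhz i (by omega), zero_mul]
    · intro i hi hi'
      simp only [Finset.mem_range, Nat.lt_succ_iff] at hi hi'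
      rcases le_or_gt i d with hc | hc
      · rw [hcz i (by omega), mul_zero]
      · rw [hhz i hc, zero_mul]
  rw [← hadj, ← hrefl, ← hL, hcoeff, hR, hrefl', hadj']
lemma ehr_uniq {d : ℕ} {p : Polynomial ℤ} (hp : p.natDegree ≤ d)
    (h0 : ∀ m : ℕ, ehrG d p m = 0) : p = 0 := by
  have hcoeff : ∀ j, j ≤ d → p.coeff j = 0 := by
    intro j
    induction j using Nat.strong_induction_on with
    | _ j ih =>
      intro hj
      have hm := h0 j
      rw [ehrG] at hm
      have hterm : ∀ i ∈ Finset.range (d+1), p.coeff i * (((j + d - i).choose d : ℕ) : ℤ)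
          = if i = j then p.coeff j else 0 := by
        intro i hi
        simp only [Finset.mem_range, Nat.lt_succ_iff] at hi
        rcases lt_trichotomy i j with hc | hc | hc
        · rw [ih i hc (by omega), zero_mul, if_neg (by omega)]
        · subst hc
          rw [if_pos rfl, show i + d - i = d from by omega, Nat.choose_self]
          simp
        · rw [if_neg (by omega), Nat.choose_eq_zero_of_lt (by omega)]
          simp
      rw [Finset.sum_congr rfl hterm,
        Finset.sum_ite_eq' (Finset.range (d+1)) j (fun _ => p.coeff j),
        if_pos (Finset.mem_range.mpr (by omega))] at hm
      exact hm
  ext j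
  rcases le_or_gt j d with hc | hc
  · rw [hcoeff j hc]; simp
  · rw [Polynomial.coeff_eq_zero_of_natDegree_lt (by omega)]; simp

lemma ehrG_sub (d : ℕ) (p q : Polynomial ℤ) (m : ℕ) :
    ehrG d (p - q) m = ehrG d p m - ehrG d q m := by
  rw [ehrG, ehrG, ehrG, ← Finset.sum_sub_distrib]
  refine Finset.sum_congr rfl fun i _ => ?_
  rw [Polynomial.coeff_sub, sub_mul]

/-- identification of the coefficients of Uh -/
lemma Uh_coeff {d n : ℕ} (hd : 0 < d) (hn : 0 < n) {h Uh : Polynomial ℤ}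
    (hdeg : h.natDegree ≤ d) (hUdeg : Uh.natDegree ≤ d)
    (hU : ∀ m : ℕ, ehrG d Uh m = ehrG d h (n * m)) :
    ∀ j ≤ d, Uh.coeff j = (h * geomP n ^ (d+1)).coeff (n*j) := by
  set Q := h * geomP n ^ (d+1) with hQ
  set V : Polynomial ℤ := ∑ j ∈ Finset.range (d+1), Polynomial.C (Q.coeff (n*j)) * X ^ j with hV
  have hVdeg : V.natDegree ≤ d := by
    apply Polynomial.natDegree_sum_le_of_forall_le
    intro j hj
    simp only [Finset.mem_range, Nat.lt_succ_iff] at hj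
    exact le_trans (Polynomial.natDegree_C_mul_le _ _) (by rw [Polynomial.natDegree_X_pow]; omega)
  have hVcoeff : ∀ j ≤ d, V.coeff j = Q.coeff (n*j) := by
    intro j hj
    rw [hV, Polynomial.finset_sum_coeff]
    simp only [Polynomial.coeff_C_mul, Polynomial.coeff_X_pow, mul_ite, mul_one, mul_zero]
    rw [Finset.sum_ite_eq (Finset.range (d+1)) j (fun q => Q.coeff (n*q)),
      if_pos (Finset.mem_range.mpr (by omega))]
  have hVehr : ∀ m : ℕ, ehrG d V m = ehrG d h (n*m) := by
    intro m
    rw [← key_coeff hd hn hdeg m, ehrG]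
    refine Finset.sum_congr rfl fun j hj => ?_
    simp only [Finset.mem_range, Nat.lt_succ_iff] at hj
    rw [hVcoeff j hj]
  have hzero : Uh - V = 0 := by
    apply ehr_uniq (d := d)
    · exact le_trans (Polynomial.natDegree_sub_le _ _) (max_le hUdeg hVdeg)
    · intro m
      rw [ehrG_sub, hU m, hVehr m, sub_self]
  have : Uh = V := by linear_combination hzero
  intro j hj
  rw [this, hVcoeff j hj]
lemma coeff_mul_left_expand {p : Polynomial ℤ} {D : ℕ} (hp : p.natDegree ≤ D)
    (q : Polynomial ℤ) (t : ℕ) :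
    (p * q).coeff t
      = ∑ x ∈ Finset.range (D+1), p.coeff x * (if x ≤ t then q.coeff (t-x) else 0) := by
  conv_lhs => rw [poly_as_sum hp]
  rw [Finset.sum_mul, Polynomial.finset_sum_coeff]
  refine Finset.sum_congr rfl fun x _ => ?_
  rw [show Polynomial.C (p.coeff x) * X ^ x * q = Polynomial.C (p.coeff x) * (q * X ^ x) from by
    ring]
  rw [Polynomial.coeff_C_mul, Polynomial.coeff_mul_X_pow']


theorem stmt18' (d n : ℕ) (hd : 0 < d) (hn : 0 < n)
    (h Uh a b a' b' : Polynomial ℤ)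
    (hdeg : h.natDegree ≤ d)
    (hUdeg : Uh.natDegree ≤ d)
    (hU : ∀ m : ℕ, ehrG d Uh m = ehrG d h (n * m))
    (hab : h = a + b)
    (hadeg : a.natDegree ≤ d) (hbdeg : b.natDegree ≤ d + 1)
    (hasym : ∀ i ≤ d, a.coeff i = a.coeff (d - i))
    (hbsym : ∀ i ≤ d + 1, b.coeff i = b.coeff (d + 1 - i))
    (hab' : Uh = a' + b')
    (ha'deg : a'.natDegree ≤ d) (hb'deg : b'.natDegree ≤ d + 1)
    (ha'sym : ∀ i ≤ d, a'.coeff i = a'.coeff (d - i))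
    (hb'sym : ∀ i ≤ d + 1, b'.coeff i = b'.coeff (d + 1 - i))
    (hadegd : a.natDegree = d) (hapos : ∀ i ≤ d, 0 < a.coeff i)
    (k : ℕ) (hk1 : 1 ≤ k) (hk2 : 2 * k ≤ d)
    (hcond :
      (n % 2 = 0 ∧ d % 2 = 0 ∧ (d : ℚ) / ((d + 1 - 2 * k : ℕ) : ℚ) ≤ (n : ℚ)) ∨
        ((d : ℚ) + 1) / ((d + 1 - 2 * k : ℕ) : ℚ) ≤ (n : ℚ)) :
    a'.coeff (k - 1) < a'.coeff k := by
  set P := geomP n ^ (d+1) with hP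
  set N := (n-1) * (d+1) with hN
  -- arithmetic identities
  have e1 : n * (d+1-2*k) = n*(d+1) - 2*(n*k) := by
    rw [Nat.mul_sub]; ring_nf
  have e3 : N = n*(d+1) - 1*(d+1) := by rw [hN, ← Nat.sub_mul]
  have e4 : n * 1 ≤ n * k := Nat.mul_le_mul_left n hk1
  have e5 : n*k ≤ n * (d+1) := Nat.mul_le_mul_left n (by omega)
  -- the numeric condition
  have hNk : 2 * (n*k) ≤ N + 1 := by
    have hcpos : (0:ℚ) < ((d + 1 - 2 * k : ℕ) : ℚ) := by
      have : 0 < d + 1 - 2*k := by omega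
      exact_mod_cast this
    rcases hcond with ⟨_, _, hq⟩ | hq
    · rw [div_le_iff₀ hcpos] at hq
      have : d ≤ n * (d+1-2*k) := by exact_mod_cast hq
      omega
    · rw [div_le_iff₀ hcpos] at hq
      have : d + 1 ≤ n * (d+1-2*k) := by exact_mod_cast hq
      omega
  have hn2 : 2 ≤ n := by
    by_contra hcon
    have hn1 : n = 1 := by omega
    subst hn1
    simp only [hN] at hNk
    omega
  have hnk2 : 2 ≤ n * k := le_trans (by omega) e4
  -- difference of a' coefficients via Uh
  have hUk := Uh_coeff hd hn hdeg hUdeg hU k (by omega)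
  have hUk' := Uh_coeff hd hn hdeg hUdeg hU (d+1-k) (by omega)
  set Q := h * P with hQ
  have hdiff : a'.coeff k - a'.coeff (k-1) = Q.coeff (n*k) - Q.coeff (n*(d+1-k)) := by
    have c1 : Uh.coeff k = a'.coeff k + b'.coeff k := by
      rw [hab', Polynomial.coeff_add]
    have c2 : Uh.coeff (d+1-k) = a'.coeff (d+1-k) + b'.coeff (d+1-k) := by
      rw [hab', Polynomial.coeff_add]
    have c3 : a'.coeff (d+1-k) = a'.coeff (k-1) := by
      rw [ha'sym (d+1-k) (by omega), show d - (d+1-k) = k-1 from by omega]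
    have c4 : b'.coeff (d+1-k) = b'.coeff k := by
      rw [hb'sym (d+1-k) (by omega), show d+1 - (d+1-k) = k from by omega]
    rw [← hUk, ← hUk', c1, c2, c3, c4]
    ring
  -- b part cancels
  have hsplit : ∀ x, Q.coeff x = (a*P).coeff x + (b*P).coeff x := by
    intro x
    rw [hQ, hab, add_mul, Polynomial.coeff_add]
  have hbcancel : (b*P).coeff (n*k) = (b*P).coeff (n*(d+1-k)) := by
    have hPdeg : P.natDegree ≤ N := natDegree_geomP_pow_le n (d+1)
    have := mul_symm hbdeg hPdeg hbsym (geomP_pow_symm n (d+1)) (r := n*k)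
      (by omega)
    rw [this]
    congr 1
    rw [Nat.mul_sub]
    omega
  -- a part shifts by one
  have hashift : (a*P).coeff (n*(d+1-k)) = (a*P).coeff (n*k - 1) := by
    have hPdeg : P.natDegree ≤ N := natDegree_geomP_pow_le n (d+1)
    have hr : n*(d+1-k) ≤ d + N := by
      have : n*(d+1-k) ≤ n*(d+1) - n := by rw [Nat.mul_sub]; have := e4; omega
      omega
    have := mul_symm hadeg hPdeg hasym (geomP_pow_symm n (d+1)) hr
    rw [this]
    congr 1
    have h6 : n*(d+1-k) = n*(d+1) - n*k := by rw [Nat.mul_sub]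
    omega
  -- final strict inequality
  have hkey : (a*P).coeff (n*k - 1) < (a*P).coeff (n*k) := by
    set s := n*k - 1 with hs
    have hs1 : n*k = s + 1 := by omega
    rw [hs1, coeff_mul_left_expand hadeg P (s+1), coeff_mul_left_expand hadeg P s]
    apply Finset.sum_lt_sum
    · intro x hx
      simp only [Finset.mem_range, Nat.lt_succ_iff] at hx
      have hax : 0 < a.coeff x := hapos x hx
      by_cases hxs : x ≤ s
      · rw [if_pos hxs, if_pos (by omega)]
        apply mul_le_mul_of_nonneg_left _ (le_of_lt hax)
        have hstep : s + 1 - x = (s - x) + 1 := by omega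
        rw [hstep]
        apply geomP_pow_mono hn2 (by omega)
        have : s - x ≤ s := by omega
        omega
      · rw [if_neg hxs]
        by_cases hxs1 : x ≤ s + 1
        · rw [if_pos hxs1, mul_zero]
          exact mul_nonneg (le_of_lt hax) (coeff_geomP_pow_nonneg n (d+1) _)
        · rw [if_neg hxs1, mul_zero]
    · rcases le_or_gt (2 * (n*k)) N with hlo | hhi
      · refine ⟨0, Finset.mem_range.mpr (by omega), ?_⟩
        rw [if_pos (by omega), if_pos (by omega)]
        simp only [Nat.sub_zero]
        apply mul_lt_mul_of_pos_left _ (hapos 0 (by omega))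
        exact geomP_pow_strict hn2 (d+1) (by omega) s (by omega)
      · refine ⟨1, Finset.mem_range.mpr (by omega), ?_⟩
        rw [if_pos (by omega), if_pos (by omega)]
        apply mul_lt_mul_of_pos_left _ (hapos 1 (by omega))
        have h7 : s + 1 - 1 = (s - 1) + 1 := by omega
        rw [h7]
        exact geomP_pow_strict hn2 (d+1) (by omega) (s-1) (by omega)
  have hfinal : Q.coeff (n*k) - Q.coeff (n*(d+1-k)) > 0 := by
    rw [hsplit, hsplit, hbcancel, hashift]
    omega
  omega

theorem stmt18 (d n : ℕ) (hd : 0 < d) (hn : 0 < n)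
    (h Uh a b a' b' : Polynomial ℤ)
    (hdeg : h.natDegree ≤ d)
    (hUdeg : Uh.natDegree ≤ d)
    (hU : ∀ m : ℕ, ehrG d Uh m = ehrG d h (n * m))
    -- h = a + b, the symmetric decomposition of h
    (hab : h = a + b)
    (hadeg : a.natDegree ≤ d) (hbdeg : b.natDegree ≤ d + 1)
    (hasym : ∀ i ≤ d, a.coeff i = a.coeff (d - i))
    (hbsym : ∀ i ≤ d + 1, b.coeff i = b.coeff (d + 1 - i))
    -- U_n h = a' + b', the symmetric decomposition of U_n h
    (hab' : Uh = a' + b')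
    (ha'deg : a'.natDegree ≤ d) (hb'deg : b'.natDegree ≤ d + 1)
    (ha'sym : ∀ i ≤ d, a'.coeff i = a'.coeff (d - i))
    (hb'sym : ∀ i ≤ d + 1, b'.coeff i = b'.coeff (d + 1 - i))
    -- a has degree d and positive coefficients
    (hadegd : a.natDegree = d) (hapos : ∀ i ≤ d, 0 < a.coeff i)
    -- fix 1 ≤ k ≤ ⌊d/2⌋
    (k : ℕ) (hk1 : 1 ≤ k) (hk2 : 2 * k ≤ d)
    -- either n and d are both even and n ≥ d/(d+1-2k), or n ≥ (d+1)/(d+1-2k)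
    (hcond :
      (n % 2 = 0 ∧ d % 2 = 0 ∧ (d : ℚ) / ((d + 1 - 2 * k : ℕ) : ℚ) ≤ (n : ℚ)) ∨
        ((d : ℚ) + 1) / ((d + 1 - 2 * k : ℕ) : ℚ) ≤ (n : ℚ)) :
    a'.coeff (k - 1) < a'.coeff k := by
  exact stmt18' d n hd hn h Uh a b a' b' hdeg hUdeg hU hab hadeg hbdeg hasym hbsym hab' ha'deg hb'deg ha'sym hb'sym hadegd hapos k hk1 hk2 hcond
end
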